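/- In the ω-twisted Z/2-graded category C* built from an additive symmetric monoidal category C and a symmetric object ω, the object ω^{1/2} := (0, 𝟙) satisfies: ω^{1/2} ⊗ ω^{1/2} is isomorphic to (ω, 0), and the braiding τ on ω^{1/2} ⊗ ω^{1/2} equals −id. -/

import Mathlib

open CategoryTheory CategoryTheory.Limits MonoidalCategory ZeroObject

universe v u

lemma zero_tensor_zero_isZero (C : Type u) [Category.{v} C] [Preadditive C] [HasZeroObject C]
    [MonoidalCategory C] [MonoidalPreadditive C] :
    IsZero ((0 : C) ⊗ (0 : C)) := by
  rw [IsZero.iff_id_eq_zero]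
  have : 𝟙 ((0 : C) ⊗ (0 : C)) = (0 : (0 : C) ⟶ 0) ⊗ₘ 𝟙 (0 : C) := by
    rw [← (isZero_zero C).eq_of_src (𝟙 (0 : C)) 0]
    simp [← id_tensorHom_id]
  rw [this, MonoidalPreadditive.zero_tensor]

theorem stmt_6 (C : Type u) [Category.{v} C] [Preadditive C] [HasZeroObject C]
    [HasBinaryBiproducts C] [MonoidalCategory C] [SymmetricCategory C]
    [MonoidalPreadditive C]
    (ω : C) (hω : (β_ ω ω).hom = 𝟙 (ω ⊗ ω)) :
    (Nonempty ((((0 : C) ⊗ (0 : C)) ⊞ ((𝟙_ C ⊗ 𝟙_ C) ⊗ ω)) ≅ ω) ∧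
      Nonempty ((((0 : C) ⊗ 𝟙_ C) ⊞ (𝟙_ C ⊗ (0 : C))) ≅ (0 : C))) ∧
    biprod.map (β_ (0 : C) (0 : C)).hom (-((β_ (𝟙_ C) (𝟙_ C)).hom ⊗ₘ 𝟙 ω)) =
      -(𝟙 ((((0 : C) ⊗ (0 : C)) ⊞ ((𝟙_ C ⊗ 𝟙_ C) ⊗ ω)))) := by
  have h00 : IsZero ((0 : C) ⊗ (0 : C)) := zero_tensor_zero_isZero C
  constructor
  · constructor
    · exact ⟨(isoZeroBiprod h00).symm ≪≫
        tensorIso (λ_ (𝟙_ C)) (Iso.refl ω) ≪≫ (λ_ ω)⟩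
    · have h1 : IsZero ((0 : C) ⊗ 𝟙_ C) := by
        rw [IsZero.iff_id_eq_zero]
        have : 𝟙 ((0 : C) ⊗ 𝟙_ C) = (0 : (0 : C) ⟶ 0) ⊗ₘ 𝟙 (𝟙_ C) := by
          rw [← (isZero_zero C).eq_of_src (𝟙 (0 : C)) 0]; simp [← id_tensorHom_id]
        rw [this, MonoidalPreadditive.zero_tensor]
      have h2 : IsZero (𝟙_ C ⊗ (0 : C)) := by
        rw [IsZero.iff_id_eq_zero]
        have : 𝟙 (𝟙_ C ⊗ (0 : C)) = 𝟙 (𝟙_ C) ⊗ₘ (0 : (0 : C) ⟶ 0) := by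
          rw [← (isZero_zero C).eq_of_src (𝟙 (0 : C)) 0]; simp [← id_tensorHom_id]
        rw [this, MonoidalPreadditive.tensor_zero]
      have : IsZero (((0 : C) ⊗ 𝟙_ C) ⊞ (𝟙_ C ⊗ (0 : C))) :=
        (biprod_isZero_iff _ _).2 ⟨h1, h2⟩
      exact ⟨this.iso (isZero_zero C)⟩
  · have hb0 : (β_ (0 : C) (0 : C)).hom = -𝟙 _ := h00.eq_of_src _ _
    have hb1 : (β_ (𝟙_ C) (𝟙_ C)).hom = 𝟙 _ := by
      have := braiding_leftUnitor (C := C) (𝟙_ C)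
      rw [unitors_equal] at this
      calc (β_ (𝟙_ C) (𝟙_ C)).hom
          = (β_ (𝟙_ C) (𝟙_ C)).hom ≫ (ρ_ (𝟙_ C)).hom ≫ (ρ_ (𝟙_ C)).inv := by simp
        _ = 𝟙 _ := by rw [reassoc_of% this]; simp
    rw [hb0, hb1, id_tensorHom_id]
    apply biprod.hom_ext <;> simp
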